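/- For every integer k ≥ 1 and θ ∈ (0, π), the antiderivative identity d/dθ [-2(-1)^k e^{iθ} · ₂F₁(1/2, 1-k; 3/2; e^{2iθ})] = (e^{2iθ}-1)^k / sin(θ) holds, where ₂F₁ is the Gauss hypergeometric function (a polynomial in e^{2iθ} since 1-k is a non-positive integer). -/

import Mathlib

open Polynomial

lemma asc_half_ne (j : ℕ) : (ascPochhammer ℂ j).eval (1 / 2 : ℂ) ≠ 0 := by
  induction j with
  | zero => simp
  | succ j ih =>
    rw [ascPochhammer_succ_eval]
    refine mul_ne_zero ih ?_
    have : ((1 / 2 : ℂ) + j) = (((1 / 2 + j : ℝ)) : ℂ) := by push_cast; ring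
    rw [this]
    exact_mod_cast ne_of_gt (by positivity : (0:ℝ) < 1/2 + j)

lemma asc_three_half (j : ℕ) :
    (ascPochhammer ℂ j).eval (3 / 2 : ℂ) =
      (2 * j + 1) * (ascPochhammer ℂ j).eval (1 / 2 : ℂ) := by
  induction j with
  | zero => simp
  | succ j ih =>
    rw [ascPochhammer_succ_eval, ascPochhammer_succ_eval, ih]
    push_cast
    ring

lemma asc_neg (m : ℕ) : ∀ j ≤ m, (ascPochhammer ℂ j).eval (-(m : ℂ)) =
    (-1) ^ j * (j.factorial : ℂ) * (m.choose j : ℂ) := by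
  intro j
  induction j with
  | zero => simp
  | succ j ih =>
    intro hj
    have hjm : j ≤ m := Nat.le_of_succ_le hj
    rw [ascPochhammer_succ_eval, ih hjm]
    have h1 : (-(m : ℂ) + j) = -(((m - j : ℕ) : ℂ)) := by
      rw [Nat.cast_sub hjm]; ring
    rw [h1]
    have h2 : (m.choose (j + 1) : ℂ) * (j + 1) = (m.choose j : ℂ) * ((m - j : ℕ) : ℂ) := by
      exact_mod_cast congrArg (Nat.cast (R := ℂ)) (Nat.choose_succ_right_eq m j)
    rw [Nat.factorial_succ]
    push_cast
    linear_combination ((-1:ℂ) ^ j * (j.factorial : ℂ)) * h2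

lemma sum_key (k : ℕ) (hk : 1 ≤ k) (w : ℂ) :
    ∑ j ∈ Finset.range k,
      ((ascPochhammer ℂ j).eval (1 / 2 : ℂ) * (ascPochhammer ℂ j).eval (1 - (k : ℂ))) /
          ((ascPochhammer ℂ j).eval (3 / 2 : ℂ)) * w ^ j / (j.factorial : ℂ) *
          (2 * j + 1)
      = (1 - w) ^ (k - 1) := by
  have h1 : (1 - (k : ℂ)) = -(((k - 1 : ℕ)) : ℂ) := by
    rw [Nat.cast_sub hk]; push_cast; ring
  have hrange : k - 1 + 1 = k := Nat.succ_pred_eq_of_pos hk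
  rw [show (1 - w) = (-w + 1) by ring, add_pow, hrange]
  refine Finset.sum_congr rfl fun j hj => ?_
  have hjk : j ≤ k - 1 := by
    have := Finset.mem_range.mp hj; omega
  rw [h1, asc_neg (k - 1) j hjk, asc_three_half]
  have hne : (ascPochhammer ℂ j).eval (1 / 2 : ℂ) ≠ 0 := asc_half_ne j
  have h2 : (2 * (j : ℂ) + 1) ≠ 0 := by
    have : (2 * (j : ℂ) + 1) = (((2 * j + 1 : ℕ)) : ℂ) := by push_cast; ring
    rw [this]; exact_mod_cast Nat.succ_ne_zero (2 * j)
  have h3 : (j.factorial : ℂ) ≠ 0 := by exact_mod_cast j.factorial_ne_zero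
  field_simp
  ring

/-- For `k ≥ 1` and `θ ∈ (0,π)`:
`d/dθ [-2 (-1)^k e^{iθ} ₂F₁(1/2, 1-k; 3/2; e^{2iθ})] = (e^{2iθ}-1)^k / sin θ`,
where `₂F₁(1/2, 1-k; 3/2; w) = ∑_{j=0}^{k-1} ((1/2)_j (1-k)_j / (3/2)_j) w^j / j!`
is a polynomial since `1-k` is a non-positive integer. -/
theorem stmt19 (k : ℕ) (hk : 1 ≤ k) (θ : ℝ) (hθ : θ ∈ Set.Ioo 0 Real.pi) :
    deriv (fun t : ℝ => -2 * (-1 : ℂ) ^ k * Complex.exp (Complex.I * t) *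
        ∑ j ∈ Finset.range k,
          ((ascPochhammer ℂ j).eval (1 / 2 : ℂ) * (ascPochhammer ℂ j).eval (1 - (k : ℂ))) /
            ((ascPochhammer ℂ j).eval (3 / 2 : ℂ)) *
            (Complex.exp (2 * Complex.I * t)) ^ j / (j.factorial : ℂ)) θ =
      (Complex.exp (2 * Complex.I * θ) - 1) ^ k / (Real.sin θ : ℂ) := by
  obtain ⟨hθ0, hθπ⟩ := hθ
  set c : ℕ → ℂ := fun j =>
    ((ascPochhammer ℂ j).eval (1 / 2 : ℂ) * (ascPochhammer ℂ j).eval (1 - (k : ℂ))) /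
      ((ascPochhammer ℂ j).eval (3 / 2 : ℂ)) / (j.factorial : ℂ) with hc
  set A : ℕ → ℂ := fun j => -2 * (-1 : ℂ) ^ k * c j with hA
  have hfun : (fun t : ℝ => -2 * (-1 : ℂ) ^ k * Complex.exp (Complex.I * t) *
        ∑ j ∈ Finset.range k,
          ((ascPochhammer ℂ j).eval (1 / 2 : ℂ) * (ascPochhammer ℂ j).eval (1 - (k : ℂ))) /
            ((ascPochhammer ℂ j).eval (3 / 2 : ℂ)) *
            (Complex.exp (2 * Complex.I * t)) ^ j / (j.factorial : ℂ))
      = fun t : ℝ => ∑ j ∈ Finset.range k,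
          A j * Complex.exp ((2 * j + 1) * Complex.I * t) := by
    funext t
    rw [Finset.mul_sum]
    refine Finset.sum_congr rfl fun j _ => ?_
    have he : Complex.exp (Complex.I * t) * (Complex.exp (2 * Complex.I * t)) ^ j
        = Complex.exp ((2 * j + 1) * Complex.I * t) := by
      rw [← Complex.exp_nat_mul, ← Complex.exp_add]
      congr 1
      ring
    rw [hA, hc]
    rw [← he]
    ring
  rw [hfun]
  have hder : HasDerivAt (fun t : ℝ => ∑ j ∈ Finset.range k,
      A j * Complex.exp ((2 * j + 1) * Complex.I * t))
      (∑ j ∈ Finset.range k,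
        A j * (Complex.exp ((2 * j + 1) * Complex.I * θ) * ((2 * j + 1) * Complex.I))) θ := by
    refine HasDerivAt.fun_sum fun j _ => ?_
    have h1 : HasDerivAt (fun t : ℝ => ((2 * (j : ℂ) + 1) * Complex.I * t : ℂ))
        ((2 * (j : ℂ) + 1) * Complex.I) θ := by
      simpa using (Complex.ofRealCLM.hasDerivAt (x := θ)).const_mul ((2 * (j : ℂ) + 1) * Complex.I)
    exact (h1.cexp).const_mul (A j)
  rw [hder.deriv]
  -- now the algebraic computation
  set w : ℂ := Complex.exp (2 * Complex.I * θ) with hw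
  have hsum : (∑ j ∈ Finset.range k,
      A j * (Complex.exp ((2 * j + 1) * Complex.I * θ) * ((2 * j + 1) * Complex.I)))
      = (-2 * (-1 : ℂ) ^ k * Complex.I * Complex.exp (Complex.I * θ)) * (1 - w) ^ (k - 1) := by
    rw [← sum_key k hk w, Finset.mul_sum]
    refine Finset.sum_congr rfl fun j _ => ?_
    have he : Complex.exp ((2 * j + 1) * Complex.I * θ)
        = Complex.exp (Complex.I * θ) * w ^ j := by
      rw [hw, ← Complex.exp_nat_mul, ← Complex.exp_add]
      congr 1
      ring
    rw [he, hA, hc]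
    ring
  rw [hsum]
  have hsin : (Real.sin θ : ℂ) ≠ 0 := by
    exact_mod_cast ne_of_gt (Real.sin_pos_of_pos_of_lt_pi hθ0 hθπ)
  have hws : w - 1 = 2 * Complex.I * Complex.exp (Complex.I * θ) * (Real.sin θ : ℂ) := by
    rw [Complex.ofReal_sin, Complex.sin, hw]
    have e1 : Complex.exp (Complex.I * θ) * Complex.exp (-(θ : ℂ) * Complex.I) = 1 := by
      rw [← Complex.exp_add, show Complex.I * θ + -(θ : ℂ) * Complex.I = 0 by ring,
        Complex.exp_zero]
    have e2 : Complex.exp (Complex.I * θ) * Complex.exp ((θ : ℂ) * Complex.I)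
        = Complex.exp (2 * Complex.I * θ) := by
      rw [← Complex.exp_add]; congr 1; ring
    have hI := Complex.I_sq
    linear_combination e1 - e2 + (Complex.exp (Complex.I * θ) * Complex.exp ((θ : ℂ) * Complex.I)
      - Complex.exp (Complex.I * θ) * Complex.exp (-(θ : ℂ) * Complex.I)) * hI
  obtain ⟨m, rfl⟩ : ∃ m, k = m + 1 := ⟨k - 1, by omega⟩
  simp only [Nat.add_sub_cancel]
  rw [show (w - 1) ^ (m + 1) / (Real.sin θ : ℂ)
      = (w - 1) ^ m * ((w - 1) / (Real.sin θ : ℂ)) by rw [pow_succ, mul_div_assoc]]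
  have hdiv : (w - 1) / (Real.sin θ : ℂ) = 2 * Complex.I * Complex.exp (Complex.I * θ) := by
    rw [hws, mul_div_assoc, div_self hsin, mul_one]
  rw [hdiv]
  have hneg : (1 - w) ^ m = (-1 : ℂ) ^ m * (w - 1) ^ m := by
    rw [← neg_pow, neg_sub]
  rw [hneg]
  have hpow : ((-1 : ℂ)) ^ (m + 1) * (-1 : ℂ) ^ m = -1 := by
    rw [← pow_add, show m + 1 + m = 2 * m + 1 by ring, pow_succ, pow_mul]
    simp
  linear_combination (-2 * Complex.I * Complex.exp (Complex.I * θ) * (w - 1) ^ m) * hpow
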